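/- Let ψ_j be a sequence of smooth functions on [−δ, δ] × M (M compact) that are convex in the first variable t uniformly up to error ε_j (i.e. ∂²_t ψ_j + ε_j ≥ 0 with ε_j → 0) and converging uniformly to a function φ independent of t. Then ∂_t ψ_j(0, ·) → 0 uniformly on M. -/

import Mathlib

open Filter

/-- If `ψ_j(t,x)` are convex in `t` up to error `ε_j → 0` on `[-δ,δ]` and converge uniformly
to a `t`-independent function `φ`, then the `t`-derivatives `∂_t ψ_j(0,·)` tend to `0`
uniformly on `M`. -/
theorem deriv_tendsto_zero_of_almost_convex {M : Type*} [TopologicalSpace M] [CompactSpace M]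
    (δ : ℝ) (hδ : 0 < δ) (ψ ψ' : ℕ → ℝ → M → ℝ) (ε : ℕ → ℝ) (φ : M → ℝ)
    (hε0 : ∀ j, 0 ≤ ε j) (hε : Tendsto ε atTop (nhds 0))
    (hderiv : ∀ j x t, HasDerivAt (fun s => ψ j s x) (ψ' j t x) t)
    (hconv : ∀ j x, ConvexOn ℝ (Set.Icc (-δ) δ) (fun t => ψ j t x + ε j * t^2))
    (hunif : ∀ c > (0:ℝ), ∃ N, ∀ j ≥ N, ∀ t ∈ Set.Icc (-δ) δ, ∀ x, |ψ j t x - φ x| ≤ c) :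
    ∀ c > (0:ℝ), ∃ N, ∀ j ≥ N, ∀ x, |ψ' j 0 x| ≤ c := by
  intro c hc
  obtain ⟨N₁, hN₁⟩ := hunif (c * δ / 4) (by positivity)
  have hεev : ∀ᶠ j in atTop, ε j < c / (2 * δ) :=
    hε.eventually (eventually_lt_nhds (by positivity))
  obtain ⟨N₂, hN₂⟩ := eventually_atTop.mp hεev
  refine ⟨max N₁ N₂, fun j hj x => ?_⟩
  have hj1 : j ≥ N₁ := le_trans (le_max_left _ _) hj
  have hj2 : j ≥ N₂ := le_trans (le_max_right _ _) hj
  set g : ℝ → ℝ := fun t => ψ j t x + ε j * t ^ 2 with hg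
  have hgd : HasDerivAt g (ψ' j 0 x) 0 := by
    have h1 : HasDerivAt (fun t : ℝ => ε j * t ^ 2) (ε j * (2 * 0)) 0 := by
      simpa using ((hasDerivAt_pow 2 (0:ℝ)).const_mul (ε j))
    have := (hderiv j x 0).add h1; simp at this; exact this
  have hmem0 : (0:ℝ) ∈ Set.Icc (-δ) δ := ⟨by linarith, hδ.le⟩
  have hmemδ : δ ∈ Set.Icc (-δ) δ := ⟨by linarith, le_refl δ⟩
  have hmemm : (-δ) ∈ Set.Icc (-δ) δ := ⟨le_refl _, by linarith⟩
  have hup : ψ' j 0 x ≤ slope g 0 δ :=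
    (hconv j x).le_slope_of_hasDerivAt hmem0 hmemδ hδ hgd
  have hlo : slope g (-δ) 0 ≤ ψ' j 0 x :=
    (hconv j x).slope_le_of_hasDerivAt hmemm hmem0 (by linarith) hgd
  have e1 : |ψ j δ x - φ x| ≤ c * δ / 4 := hN₁ j hj1 δ hmemδ x
  have e2 : |ψ j 0 x - φ x| ≤ c * δ / 4 := hN₁ j hj1 0 hmem0 x
  have e3 : |ψ j (-δ) x - φ x| ≤ c * δ / 4 := hN₁ j hj1 (-δ) hmemm x
  rw [abs_le] at e1 e2 e3
  have hεj : ε j < c / (2 * δ) := hN₂ j hj2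
  have hs1 : slope g 0 δ = (ψ j δ x + ε j * δ ^ 2 - (ψ j 0 x + ε j * 0 ^ 2)) / δ := by
    simp [hg, slope_def_field]
  have hs2 : slope g (-δ) 0 = (ψ j 0 x + ε j * 0 ^ 2 - (ψ j (-δ) x + ε j * (-δ) ^ 2)) / δ := by
    rw [hg, slope_def_field]; ring
  rw [hs1] at hup
  rw [hs2] at hlo
  rw [abs_le]
  constructor
  · rw [div_le_iff₀ hδ] at hlo
    have hεδ : ε j * δ ^ 2 ≤ c / 2 * δ := by
      have := (lt_div_iff₀ (by positivity : (0:ℝ) < 2 * δ)).mp hεj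
      nlinarith [hε0 j, hδ]
    nlinarith
  · rw [le_div_iff₀ hδ] at hup
    have hεδ : ε j * δ ^ 2 ≤ c / 2 * δ := by
      have := (lt_div_iff₀ (by positivity : (0:ℝ) < 2 * δ)).mp hεj
      nlinarith [hε0 j, hδ]
    nlinarith
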